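/- Let n ≥ 2 and let g be the function defined below. Then (3/2) g'(t) + 2n g(t) ≥ 0 for all t ∈ ℝ \ {0}, and consequently also g'(t) + 2n g(t) ≥ 0 for all t ∈ ℝ \ {0} (using g' ≤ 0). -/
import Mathlib


open MeasureTheory Metric Set Filter
open scoped Topology RealInnerProductSpace NNReal ENNReal

noncomputable section

/-- `ℝⁿ` with the Euclidean structure. -/
abbrev Euc (n : ℕ) := EuclideanSpace ℝ (Fin n)

/-- Pointwise Laplacian of `u : ℝⁿ → ℝ`. -/
def lap {n : ℕ} (u : Euc n → ℝ) (x : Euc n) : ℝ :=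
  ∑ i : Fin n, fderiv ℝ (fun y => fderiv ℝ u y (EuclideanSpace.single i 1)) x
    (EuclideanSpace.single i 1)

/-- The fundamental solution `g` from Lemma 3.2 of the paper:
`g(t) = −(1/(2n√(n²+8)))·(n e^{−(1/2)(n−√(n²+8))t} − √(n²+8))` for `t < 0` and
`g(t) = −(1/(2n√(n²+8)))·(n e^{−(1/2)(n+√(n²+8))t} − √(n²+8) e^{−nt})` for `t ≥ 0`. -/
def gfun (n : ℕ) (t : ℝ) : ℝ :=
  if t < 0 then
    -(1 / (2 * (n : ℝ) * Real.sqrt ((n : ℝ) ^ 2 + 8))) *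
      ((n : ℝ) * Real.exp (-(1 / 2) * ((n : ℝ) - Real.sqrt ((n : ℝ) ^ 2 + 8)) * t)
        - Real.sqrt ((n : ℝ) ^ 2 + 8))
  else
    -(1 / (2 * (n : ℝ) * Real.sqrt ((n : ℝ) ^ 2 + 8))) *
      ((n : ℝ) * Real.exp (-(1 / 2) * ((n : ℝ) + Real.sqrt ((n : ℝ) ^ 2 + 8)) * t)
        - Real.sqrt ((n : ℝ) ^ 2 + 8) * Real.exp (-(n : ℝ) * t))

lemma gfun_deriv_neg (n : ℕ) {t : ℝ} (ht : t < 0) :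
    deriv (gfun n) t =
      -(1 / (2 * (n : ℝ) * Real.sqrt ((n : ℝ) ^ 2 + 8))) *
        ((n : ℝ) * (Real.exp (-(1 / 2) * ((n : ℝ) - Real.sqrt ((n : ℝ) ^ 2 + 8)) * t) *
          (-(1 / 2) * ((n : ℝ) - Real.sqrt ((n : ℝ) ^ 2 + 8))))) := by
  set s := Real.sqrt ((n : ℝ) ^ 2 + 8) with hsdef
  set c := -(1 / (2 * (n : ℝ) * s)) with hcdef
  set k := -(1 / 2) * ((n : ℝ) - s) with hkdef
  have heq : gfun n =ᶠ[𝓝 t] fun x => c * ((n : ℝ) * Real.exp (k * x) - s) := by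
    filter_upwards [Iio_mem_nhds ht] with x hx
    rw [gfun, if_pos (mem_Iio.mp hx), hcdef, hkdef]
  rw [heq.deriv_eq]
  have h : HasDerivAt (fun x => c * ((n : ℝ) * Real.exp (k * x) - s))
      (c * ((n : ℝ) * (Real.exp (k * t) * (k * 1)))) t := by
    exact ((((hasDerivAt_id t).const_mul k).exp.const_mul (n : ℝ)).sub_const s).const_mul c
  simpa using h.deriv

lemma gfun_deriv_pos (n : ℕ) {t : ℝ} (ht : 0 < t) :
    deriv (gfun n) t =
      -(1 / (2 * (n : ℝ) * Real.sqrt ((n : ℝ) ^ 2 + 8))) *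
        ((n : ℝ) * (Real.exp (-(1 / 2) * ((n : ℝ) + Real.sqrt ((n : ℝ) ^ 2 + 8)) * t) *
          (-(1 / 2) * ((n : ℝ) + Real.sqrt ((n : ℝ) ^ 2 + 8))))
        - Real.sqrt ((n : ℝ) ^ 2 + 8) * (Real.exp (-(n : ℝ) * t) * (-(n : ℝ)))) := by
  set s := Real.sqrt ((n : ℝ) ^ 2 + 8) with hsdef
  set c := -(1 / (2 * (n : ℝ) * s)) with hcdef
  set k := -(1 / 2) * ((n : ℝ) + s) with hkdef
  have heq : gfun n =ᶠ[𝓝 t] fun x => c * ((n : ℝ) * Real.exp (k * x) - s * Real.exp (-(n : ℝ) * x)) := by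
    filter_upwards [Ioi_mem_nhds ht] with x hx
    rw [gfun, if_neg (not_lt.mpr (le_of_lt (mem_Ioi.mp hx))), hcdef, hkdef]
  rw [heq.deriv_eq]
  have h : HasDerivAt (fun x => c * ((n : ℝ) * Real.exp (k * x) - s * Real.exp (-(n : ℝ) * x)))
      (c * ((n : ℝ) * (Real.exp (k * t) * (k * 1)) - s * (Real.exp (-(n : ℝ) * t) * (-(n : ℝ) * 1)))) t := by
    exact (((((hasDerivAt_id t).const_mul k).exp.const_mul (n : ℝ)).sub
      (((hasDerivAt_id t).const_mul (-(n:ℝ))).exp.const_mul s)).const_mul c)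
  simpa using h.deriv

lemma gfun_combo (n : ℕ) (hn : 2 ≤ n) (a : ℝ) (ha1 : 1 ≤ a) (ha2 : a ≤ 3 / 2) :
    ∀ t : ℝ, t ≠ 0 → 0 ≤ a * deriv (gfun n) t + 2 * (n : ℝ) * gfun n t := by
  intro t ht
  have hn0 : (0 : ℝ) < n := by exact_mod_cast Nat.lt_of_lt_of_le Nat.zero_lt_two hn
  set s := Real.sqrt ((n : ℝ) ^ 2 + 8) with hsdef
  have hs0 : 0 < s := Real.sqrt_pos.mpr (by positivity)
  have hs2 : s ^ 2 = (n : ℝ) ^ 2 + 8 := Real.sq_sqrt (by positivity)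
  have hns : (n : ℝ) ≤ s := by nlinarith
  rcases ht.lt_or_gt with htneg | htpos
  · rw [gfun_deriv_neg n htneg]
    have hg : gfun n t = -(1 / (2 * (n : ℝ) * s)) *
        ((n : ℝ) * Real.exp (-(1 / 2) * ((n : ℝ) - s) * t) - s) := by
      rw [gfun, if_pos htneg]
    rw [hg]
    set E := Real.exp (-(1 / 2) * ((n : ℝ) - s) * t) with hEdef
    have hE0 : 0 < E := Real.exp_pos _
    have hE1 : E ≤ 1 := by
      rw [hEdef, Real.exp_le_one_iff]
      nlinarith
    have heq : a * (-(1 / (2 * (n : ℝ) * s)) * ((n : ℝ) * (E * (-(1 / 2) * ((n : ℝ) - s)))))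
        + 2 * (n : ℝ) * (-(1 / (2 * (n : ℝ) * s)) * ((n : ℝ) * E - s))
        = (4 * s - E * (a * (s - (n : ℝ)) + 4 * (n : ℝ))) / (4 * s) := by
      field_simp
      ring
    rw [heq]
    apply div_nonneg _ (by positivity)
    nlinarith [mul_nonneg (sub_nonneg.mpr hE1) (show (0:ℝ) ≤ a * (s - n) + 4 * n by nlinarith),
      mul_nonneg (sub_nonneg.mpr ha2) hs0.le]
  · rw [gfun_deriv_pos n htpos]
    have hg : gfun n t = -(1 / (2 * (n : ℝ) * s)) *
        ((n : ℝ) * Real.exp (-(1 / 2) * ((n : ℝ) + s) * t) - s * Real.exp (-(n : ℝ) * t)) := by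
      rw [gfun, if_neg (not_lt.mpr htpos.le)]
    rw [hg]
    set E1 := Real.exp (-(1 / 2) * ((n : ℝ) + s) * t) with hE1def
    set E2 := Real.exp (-(n : ℝ) * t) with hE2def
    have hE10 : 0 < E1 := Real.exp_pos _
    have hE20 : 0 < E2 := Real.exp_pos _
    have hE12 : E1 ≤ E2 := by
      rw [hE1def, hE2def, Real.exp_le_exp]
      nlinarith
    have heq : a * (-(1 / (2 * (n : ℝ) * s)) * ((n : ℝ) * (E1 * (-(1 / 2) * ((n : ℝ) + s)))
          - s * (E2 * (-(n : ℝ)))))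
        + 2 * (n : ℝ) * (-(1 / (2 * (n : ℝ) * s)) * ((n : ℝ) * E1 - s * E2))
        = (E1 * (a * ((n : ℝ) + s) - 4 * (n : ℝ)) + E2 * (4 - 2 * a) * s) / (4 * s) := by
      field_simp
      ring
    rw [heq]
    apply div_nonneg _ (by positivity)
    nlinarith [mul_nonneg (sub_nonneg.mpr hE12) hs0.le,
      mul_nonneg (sub_nonneg.mpr hns) hE10.le,
      mul_nonneg (mul_nonneg (sub_nonneg.mpr hE12) hs0.le) (show (0:ℝ) ≤ 4 - 2*a by linarith),
      mul_nonneg (mul_nonneg (sub_nonneg.mpr hns) hE10.le) (show (0:ℝ) ≤ a by linarith)]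

/-- `(3/2) g' + 2n g ≥ 0` away from the origin, and consequently (using `g' ≤ 0`)
`g' + 2n g ≥ 0` away from the origin. -/
theorem gfun_positive_combinations (n : ℕ) (hn : 2 ≤ n) :
    (∀ t : ℝ, t ≠ 0 → 0 ≤ (3 / 2) * deriv (gfun n) t + 2 * (n : ℝ) * gfun n t) ∧
    (∀ t : ℝ, t ≠ 0 → 0 ≤ deriv (gfun n) t + 2 * (n : ℝ) * gfun n t) := by
  constructor
  · exact gfun_combo n hn (3 / 2) (by norm_num) le_rfl
  · intro t ht
    have := gfun_combo n hn 1 le_rfl (by norm_num) t ht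
    linarith
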